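/- Let T be a triangulated category with thick subcategories X and Y, and set U = X ∩ Y. If X * Y = T, then the pair (X/U, Y/U) is a stable t-structure in the Verdier quotient T/U. -/

import Mathlib

open CategoryTheory Limits Pretriangulated

universe v u

variable {C : Type u} [Category.{v} C] [HasZeroObject C] [HasShift C ℤ]
  [Preadditive C] [∀ n : ℤ, (shiftFunctor C n).Additive] [Pretriangulated C]

/-- `S * T` for classes of objects of a pretriangulated category. -/
def star (S T : Set C) : Set C :=
  {E | ∃ (X Y : C) (f : X ⟶ E) (g : E ⟶ Y) (h : Y ⟶ X⟦(1 : ℤ)⟧),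
    X ∈ S ∧ Y ∈ T ∧ Triangle.mk f g h ∈ distTriang C}

/-- A pair of classes of objects of a pretriangulated category is a stable t-structure. -/
def IsStableTStructure (D : Type*) [Category D] [HasZeroObject D] [HasShift D ℤ]
    [Preadditive D] [∀ n : ℤ, (shiftFunctor D n).Additive] [Pretriangulated D]
    (U V : Set D) : Prop :=
  (∀ u ∈ U, ∀ n : ℤ, u⟦n⟧ ∈ U) ∧ (∀ v ∈ V, ∀ n : ℤ, v⟦n⟧ ∈ V) ∧
  (∀ u ∈ U, ∀ v ∈ V, ∀ f : u ⟶ v, f = 0) ∧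
  (∀ t : D, ∃ (u v : D) (f : u ⟶ t) (g : t ⟶ v) (h : v ⟶ u⟦(1 : ℤ)⟧),
     u ∈ U ∧ v ∈ V ∧ Triangle.mk f g h ∈ distTriang D)

namespace CategoryTheory.Triangulated

open ZeroObject

variable (C)

/-- The old Mathlib structure of a triangulated subcategory (removed from Mathlib). -/
structure Subcategory where
  P : C → Prop
  zero' : ∃ (Z : C) (_ : IsZero Z), P Z
  shift (X : C) (n : ℤ) : P X → P (X⟦n⟧)
  ext₂' (T : Triangle C) (_ : T ∈ distTriang C) : P T.obj₁ → P T.obj₃ →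
    ObjectProperty.isoClosure P T.obj₂

namespace Subcategory

variable {C}

variable (S : Subcategory C)

lemma zero [ObjectProperty.IsClosedUnderIsomorphisms S.P] : S.P 0 := by
  obtain ⟨X, hX, mem⟩ := S.zero'
  exact ObjectProperty.prop_of_iso _ hX.isoZero mem

lemma ext₂ [ObjectProperty.IsClosedUnderIsomorphisms S.P]
    (T : Triangle C) (hT : T ∈ distTriang C) (h₁ : S.P T.obj₁)
    (h₃ : S.P T.obj₃) : S.P T.obj₂ := by
  simpa only [ObjectProperty.isoClosure_eq_self] using S.ext₂' T hT h₁ h₃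

/-- Constructor for a triangulated subcategory. -/
def mk' (P : C → Prop) (zero : P 0)
    (shift : ∀ (X : C) (n : ℤ), P X → P (X⟦n⟧))
    (ext₂ : ∀ (T : Triangle C) (_ : T ∈ distTriang C), P T.obj₁ → P T.obj₃ → P T.obj₂) :
    Subcategory C where
  P := P
  zero' := ⟨0, isZero_zero _, zero⟩
  shift := shift
  ext₂' T hT h₁ h₃ := ObjectProperty.le_isoClosure P _ (ext₂ T hT h₁ h₃)

instance : ObjectProperty.IsTriangulated S.P where
  exists_zero := by
    obtain ⟨Z, hZ, h⟩ := S.zero'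
    exact ⟨Z, hZ, h⟩
  isStableUnderShiftBy a := ⟨fun X h => S.shift X a h⟩
  ext₂' := S.ext₂'

/-- The class of morphisms whose cone is in `S`. -/
abbrev W : MorphismProperty C := ObjectProperty.trW S.P

end Subcategory

end CategoryTheory.Triangulated

/-- The intersection of two (strictly full) triangulated subcategories. -/
def interSub (X Y : Triangulated.Subcategory C) [ObjectProperty.IsClosedUnderIsomorphisms X.P]
    [ObjectProperty.IsClosedUnderIsomorphisms Y.P] : Triangulated.Subcategory C :=
  Triangulated.Subcategory.mk' (fun t => X.P t ∧ Y.P t)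
    ⟨X.zero, Y.zero⟩
    (fun t n h => ⟨X.shift t n h.1, Y.shift t n h.2⟩)
    (fun T hT h₁ h₃ => ⟨X.ext₂ T hT h₁.1 h₃.1, Y.ext₂ T hT h₁.2 h₃.2⟩)

/-- Key lemma: a morphism from an object of `X` to an object of `Y` is annihilated by
composition with a morphism in `(interSub X Y).W`. -/
lemma exists_W_comp_eq_zero [IsTriangulated C]
    (X Y : Triangulated.Subcategory C)
    [ObjectProperty.IsClosedUnderIsomorphisms X.P] [ObjectProperty.IsClosedUnderIsomorphisms Y.P]
    (hstar : ∀ E : C, E ∈ star {x | X.P x} {y | Y.P y})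
    {x y : C} (a : x ⟶ y) (hx : X.P x) (hy : Y.P y) :
    ∃ (y'' : C) (s : y ⟶ y''), (interSub X Y).W s ∧ a ≫ s = 0 := by
  obtain ⟨c, b, d, hcb⟩ := distinguished_cocone_triangle a
  obtain ⟨xc, yc, e, f, g, hxc, hyc, hT⟩ := hstar c
  obtain ⟨z, p, q, hz⟩ := distinguished_cocone_triangle (b ≫ f)
  have h₁₂ : Triangle.mk b d (-a⟦(1 : ℤ)⟧') ∈ distTriang C := rot_of_distTriang _ hcb
  have h₂₃ : Triangle.mk f g (-e⟦(1 : ℤ)⟧') ∈ distTriang C := rot_of_distTriang _ hT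
  have H := Triangulated.someOctahedron rfl h₁₂ h₂₃ hz
  have hzX : X.P z := X.ext₂ _ H.mem (X.shift x 1 hx) (X.shift xc 1 hxc)
  have hzY : Y.P z := ObjectProperty.ext_of_isTriangulatedClosed₃ (P := Y.P) _ hz hy hyc
  refine ⟨yc, b ≫ f, ⟨z, p, q, hz, ⟨hzX, hzY⟩⟩, ?_⟩
  have hab : a ≫ b = 0 := comp_distTriang_mor_zero₁₂ _ hcb
  rw [← Category.assoc, hab, zero_comp]

theorem stable_t_structure_of_star_eq_top [IsTriangulated C]
    (X Y : Triangulated.Subcategory C)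
    [ObjectProperty.IsClosedUnderIsomorphisms X.P] [ObjectProperty.IsClosedUnderIsomorphisms Y.P]
    (hXthick : ∀ ⦃a b : C⦄ (i : a ⟶ b) (r : b ⟶ a), i ≫ r = 𝟙 a → X.P b → X.P a)
    (hYthick : ∀ ⦃a b : C⦄ (i : a ⟶ b) (r : b ⟶ a), i ≫ r = 𝟙 a → Y.P b → Y.P a)
    (hstar : ∀ E : C, E ∈ star {x | X.P x} {y | Y.P y}) :
    IsStableTStructure (interSub X Y).W.Localization
      {d | ∃ x : C, X.P x ∧ Nonempty (d ≅ (interSub X Y).W.Q.obj x)}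
      {d | ∃ y : C, Y.P y ∧ Nonempty (d ≅ (interSub X Y).W.Q.obj y)} := by
  set W := (interSub X Y).W with hW
  set Q := W.Q with hQ
  refine ⟨?_, ?_, ?_, ?_⟩
  · rintro u ⟨x, hx, ⟨e⟩⟩ n
    exact ⟨x⟦n⟧, X.shift x n hx,
      ⟨(shiftFunctor _ n).mapIso e ≪≫ ((Q.commShiftIso n).app x).symm⟩⟩
  · rintro v ⟨y, hy, ⟨e⟩⟩ n
    exact ⟨y⟦n⟧, Y.shift y n hy,
      ⟨(shiftFunctor _ n).mapIso e ≪≫ ((Q.commShiftIso n).app y).symm⟩⟩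
  · rintro u ⟨x, hx, ⟨eu⟩⟩ v ⟨y, hy, ⟨ev⟩⟩ f
    have hg : eu.inv ≫ f ≫ ev.hom = 0 := by
      obtain ⟨φ, hφ⟩ := Localization.exists_rightFraction Q W (eu.inv ≫ f ≫ ev.hom)
      obtain ⟨Z, g', h', hT', hZX, hZY⟩ := φ.hs
      have hx' : X.P φ.X' := ObjectProperty.ext_of_isTriangulatedClosed₁ (P := X.P) _ hT' hx hZX
      obtain ⟨y'', s, hs, hcomp⟩ := exists_W_comp_eq_zero X Y hstar φ.f hx' hy
      have : IsIso (Q.map s) := Localization.inverts Q W s hs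
      have hQf : Q.map φ.f = 0 := by
        have : Q.map φ.f ≫ Q.map s = 0 := by
          rw [← Q.map_comp, hcomp, Q.map_zero]
        rw [← cancel_mono (Q.map s), this, zero_comp]
      rw [hφ]
      dsimp [MorphismProperty.RightFraction.map]
      rw [hQf, comp_zero]
    calc f = eu.hom ≫ (eu.inv ≫ f ≫ ev.hom) ≫ ev.inv := by simp
    _ = 0 := by rw [hg, zero_comp, comp_zero]
  · intro t
    have : Q.EssSurj := Localization.essSurj Q W
    obtain ⟨E, ⟨e⟩⟩ : ∃ E : C, Nonempty (Q.obj E ≅ t) := ⟨_, ⟨Q.objObjPreimageIso t⟩⟩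
    obtain ⟨x, y, f, g, h, hx, hy, hT⟩ := hstar E
    have hQT := Q.map_distinguished _ hT
    refine ⟨Q.obj x, Q.obj y, Q.map f ≫ e.hom, e.inv ≫ Q.map g,
      Q.map h ≫ (Q.commShiftIso (1 : ℤ)).hom.app x,
      ⟨x, hx, ⟨Iso.refl _⟩⟩, ⟨y, hy, ⟨Iso.refl _⟩⟩, ?_⟩
    refine isomorphic_distinguished _ hQT _ ?_
    exact Triangle.isoMk _ _ (Iso.refl _) e.symm (Iso.refl _)
      (by show (Q.map f ≫ e.hom) ≫ e.inv = 𝟙 (Q.obj x) ≫ Q.map f; simp)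
      (by show (e.inv ≫ Q.map g) ≫ 𝟙 (Q.obj y) = e.inv ≫ Q.map g; simp)
      (by
        show (Q.map h ≫ (Q.commShiftIso (1 : ℤ)).hom.app x) ≫ (shiftFunctor _ (1 : ℤ)).map (𝟙 (Q.obj x)) =
          𝟙 (Q.obj y) ≫ Q.map h ≫ (Q.commShiftIso (1 : ℤ)).hom.app x
        simp)
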